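/- Let K₁₁, K₁₂, K₂₁, K₂₂ be nonnegative n×n matrices and α₁, α₂ > 0 with α₁ + α₂ = 1. Then entrywise (K₁₁^(α₁) ∘ K₁₂^(α₂))(K₂₁^(α₁) ∘ K₂₂^(α₂)) ≤ (K₁₁K₂₁)^(α₁) ∘ (K₁₂K₂₂)^(α₂). -/

import Mathlib

open scoped ENNReal
open Finset
noncomputable def specRad {n : ℕ} (A : Matrix (Fin n) (Fin n) ℝ) : ℝ≥0∞ :=
  spectralRadius ℂ (A.map (algebraMap ℝ ℂ))
noncomputable def opNorm {n : ℕ} (A : Matrix (Fin n) (Fin n) ℝ) : ℝ :=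
  ‖Matrix.toEuclideanCLM (𝕜 := ℝ) A‖

theorem stmt2 {n : ℕ} (K11 K12 K21 K22 : Matrix (Fin n) (Fin n) ℝ)
    (h11 : ∀ i j, 0 ≤ K11 i j) (h12 : ∀ i j, 0 ≤ K12 i j)
    (h21 : ∀ i j, 0 ≤ K21 i j) (h22 : ∀ i j, 0 ≤ K22 i j)
    (α₁ α₂ : ℝ) (hα₁ : 0 < α₁) (hα₂ : 0 < α₂) (hsum : α₁ + α₂ = 1) :
    ∀ i j,
      ((Matrix.of fun i j => (K11 i j) ^ α₁ * (K12 i j) ^ α₂) *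
        (Matrix.of fun i j => (K21 i j) ^ α₁ * (K22 i j) ^ α₂)) i j ≤
      ((K11 * K21) i j) ^ α₁ * ((K12 * K22) i j) ^ α₂ := by
  intro i j
  have hα₁1 : α₁ < 1 := by linarith
  set p : ℝ := 1 / α₁ with hp
  set q : ℝ := 1 / α₂ with hq
  have hpq : p.HolderConjugate q := by
    rw [Real.holderConjugate_iff]
    constructor
    · exact one_lt_one_div hα₁ hα₁1
    · rw [hp, hq]; field_simp; linarith
  set a : Fin n → ℝ := fun k => K11 i k * K21 k j with ha
  set b : Fin n → ℝ := fun k => K12 i k * K22 k j with hb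
  have hanonneg : ∀ k, 0 ≤ a k := fun k => mul_nonneg (h11 i k) (h21 k j)
  have hbnonneg : ∀ k, 0 ≤ b k := fun k => mul_nonneg (h12 i k) (h22 k j)
  have key := Real.inner_le_Lp_mul_Lq_of_nonneg (univ : Finset (Fin n))
    hpq (f := fun k => a k ^ α₁) (g := fun k => b k ^ α₂)
    (fun k _ => Real.rpow_nonneg (hanonneg k) _)
    (fun k _ => Real.rpow_nonneg (hbnonneg k) _)
  have hfp : ∀ k, (a k ^ α₁) ^ p = a k := fun k => by
    rw [← Real.rpow_mul (hanonneg k), hp, mul_one_div, div_self hα₁.ne', Real.rpow_one]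
  have hgq : ∀ k, (b k ^ α₂) ^ q = b k := fun k => by
    rw [← Real.rpow_mul (hbnonneg k), hq, mul_one_div, div_self hα₂.ne', Real.rpow_one]
  simp only [hfp, hgq] at key
  have hlhs : ((Matrix.of fun i j => (K11 i j) ^ α₁ * (K12 i j) ^ α₂) *
        (Matrix.of fun i j => (K21 i j) ^ α₁ * (K22 i j) ^ α₂)) i j
      = ∑ k, a k ^ α₁ * b k ^ α₂ := by
    rw [Matrix.mul_apply]
    refine Finset.sum_congr rfl fun k _ => ?_
    simp only [Matrix.of_apply, ha, hb]
    rw [Real.mul_rpow (h11 i k) (h21 k j), Real.mul_rpow (h12 i k) (h22 k j)]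
    ring
  have hrhs : ((K11 * K21) i j) ^ α₁ * ((K12 * K22) i j) ^ α₂
      = (∑ k, a k) ^ (1 / p) * (∑ k, b k) ^ (1 / q) := by
    rw [Matrix.mul_apply, Matrix.mul_apply, hp, hq, one_div_one_div, one_div_one_div]
  rw [hlhs, hrhs]
  exact key
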